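/- Let V̲ be a real number, V₀ > V̲, and a < b real numbers with b − a < V₀ − V̲. Suppose for each v in [a, b], H_v : ℝ → ℝ is a continuous weakly increasing function with H_v(x) = 0 for x ≤ V̲ and H_v(x) > 0 for x > V̲, such that H_v(x) = ∫_{V̲}^{x} h_v(s) ds for x in (V̲, V₀) where h_v is continuous and strictly positive on (V̲, V₀), and for each fixed V in (V̲, V₀) the map v ↦ H_v(V) is continuously differentiable on (a, b). Then it cannot hold that ∂H_v(V)/∂v + h_v(V) < 0 for all v in (a, b) and all V in (V̲, V₀); that is, no such family with −(∂H_v(V)/∂v)/h_v(V) > 1 throughout this region exists. -/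

import Mathlib

open MeasureTheory Set Filter Topology

set_option maxHeartbeats 2000000 in
/-- **Corner lemma for Proposition 2.**
Let `Vlo < V0` and `a < b` with `b - a < V0 - Vlo`.  Suppose for each `v ∈ [a, b]`,
`H v : ℝ → ℝ` is a continuous weakly increasing function with `H v x = 0` for `x ≤ Vlo`
and `H v x > 0` for `x > Vlo`, such that `H v x = ∫_{Vlo}^{x} h v` on `(Vlo, V0)` where
`h v` is continuous and strictly positive on `(Vlo, V0)`, and for each fixed
`V ∈ (Vlo, V0)` the map `v ↦ H v V` is continuously differentiable on `(a, b)` with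
derivative `Hv v V`.  Then it cannot hold that `∂H_v(V)/∂v + h_v(V) < 0` for all
`v ∈ (a, b)` and all `V ∈ (Vlo, V0)`; that is, no such family with
`-(∂H_v(V)/∂v)/h_v(V) > 1` throughout this region exists. -/
theorem stmt_5
    (Vlo V0 a b : ℝ) (hV : Vlo < V0) (hab : a < b) (hsmall : b - a < V0 - Vlo)
    (H h Hv : ℝ → ℝ → ℝ)
    (hH_cont : ∀ v ∈ Icc a b, Continuous (H v))
    (hH_mono : ∀ v ∈ Icc a b, Monotone (H v))
    (hzero : ∀ v ∈ Icc a b, ∀ x : ℝ, x ≤ Vlo → H v x = 0)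
    (hpos : ∀ v ∈ Icc a b, ∀ x : ℝ, Vlo < x → 0 < H v x)
    (hcdf : ∀ v ∈ Icc a b, ∀ x ∈ Ioo Vlo V0, H v x = ∫ t in Ioc Vlo x, h v t)
    (hh_cont : ∀ v ∈ Icc a b, ContinuousOn (h v) (Ioo Vlo V0))
    (hh_pos : ∀ v ∈ Icc a b, ∀ V ∈ Ioo Vlo V0, 0 < h v V)
    (hH_deriv : ∀ V ∈ Ioo Vlo V0, ∀ v ∈ Ioo a b, HasDerivAt (fun v => H v V) (Hv v V) v)
    (hHv_cont : ∀ V ∈ Ioo Vlo V0, ContinuousOn (fun v => Hv v V) (Ioo a b)) :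
    ¬ (∀ v ∈ Ioo a b, ∀ V ∈ Ioo Vlo V0, Hv v V + h v V < 0) := by
  intro hcon
  -- basic constants
  obtain ⟨c, hc, hcab⟩ : ∃ c : ℝ, 0 < c ∧ c = (b - a) / 4 := ⟨(b - a) / 4, by linarith, rfl⟩
  set v₁ : ℝ := a + c with hv₁def
  set v₂ : ℝ := b - c with hv₂def
  have h12 : v₁ < v₂ := by rw [hv₁def, hv₂def]; rw [hcab]; linarith
  have hΔpos : 0 < v₂ - v₁ := by linarith
  have hΔsmall : v₂ - v₁ < (V0 - Vlo) / 2 := by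
    rw [hv₁def, hv₂def, hcab]; linarith
  have hv₁I : v₁ ∈ Ioo a b := ⟨by rw [hv₁def]; linarith, by rw [hv₁def, hcab]; linarith⟩
  have hv₂I : v₂ ∈ Ioo a b := ⟨by rw [hv₂def, hcab]; linarith, by rw [hv₂def]; linarith⟩
  have hIooIcc : Ioo a b ⊆ Icc a b := Ioo_subset_Icc_self
  have hsub1 : Icc v₁ v₂ ⊆ Ioo a b := fun u hu =>
    ⟨lt_of_lt_of_le hv₁I.1 hu.1, lt_of_le_of_lt hu.2 hv₂I.2⟩
  set t₀ : ℝ := Vlo + (v₂ - v₁) / 2 with ht₀def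
  have ht₀1 : Vlo < t₀ := by rw [ht₀def]; linarith
  have ht₀2 : t₀ < V0 := by rw [ht₀def]; linarith
  set m : ℝ := H v₂ t₀ with hmdef
  have hm : 0 < m := hpos v₂ (hIooIcc hv₂I) t₀ ht₀1
  -- choose A close to Vlo
  obtain ⟨A, hA⟩ : ∃ A, A ∈ Ioo Vlo t₀ ∧ H v₁ A < m / 2 := by
    have hcont : Tendsto (H v₁) (𝓝 Vlo) (𝓝 0) := by
      have := (hH_cont v₁ (hIooIcc hv₁I)).continuousAt (x := Vlo)
      rwa [ContinuousAt, hzero v₁ (hIooIcc hv₁I) Vlo le_rfl] at this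
    have hev : ∀ᶠ x in 𝓝[>] Vlo, H v₁ x < m / 2 :=
      eventually_nhdsWithin_of_eventually_nhds
        (hcont.eventually_lt_const (by linarith))
    have hmem : Ioo Vlo t₀ ∈ 𝓝[>] Vlo := Ioo_mem_nhdsGT_of_mem ⟨le_rfl, ht₀1⟩
    exact ((Filter.eventually_mem_set.2 hmem).and hev).exists
  obtain ⟨⟨hVloA, hAt₀⟩, hHv₁A⟩ := hA
  set B : ℝ := A + (v₂ - v₁) with hBdef
  have hAB : A < B := by rw [hBdef]; linarith
  have ht₀B : t₀ < B := by rw [hBdef]; rw [ht₀def] at hAt₀ ⊢; linarith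
  have hBV0 : B < V0 := by rw [hBdef]; rw [ht₀def] at hAt₀; linarith
  have hA_mem : A ∈ Ioo Vlo V0 := ⟨hVloA, lt_trans hAt₀ ht₀2⟩
  have hsub2 : Icc A B ⊆ Ioo Vlo V0 := fun t ht =>
    ⟨lt_of_lt_of_le hVloA ht.1, lt_of_le_of_lt ht.2 hBV0⟩
  -- integrability of densities
  have hInt : ∀ v ∈ Icc a b, ∀ x ∈ Ioo Vlo V0, IntegrableOn (h v) (Ioc Vlo x) := by
    intro v hv x hx
    by_contra hni
    have h0 : ∫ t in Ioc Vlo x, h v t = 0 := integral_undef hni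
    have := hpos v hv x hx.1
    rw [hcdf v hv x hx, h0] at this
    exact lt_irrefl _ this
  -- splitting the cdf integral
  have hsplit : ∀ v ∈ Icc a b, ∀ x ∈ Ioo Vlo V0, ∀ y ∈ Ioo Vlo V0, x ≤ y →
      ∫ t in Ioc x y, h v t = H v y - H v x := by
    intro v hv x hx y hy hxy
    have hU : Ioc Vlo x ∪ Ioc x y = Ioc Vlo y := Ioc_union_Ioc_eq_Ioc hx.1.le hxy
    have hd : Disjoint (Ioc Vlo x) (Ioc x y) := Ioc_disjoint_Ioc_of_le le_rfl
    have h1 : IntegrableOn (h v) (Ioc Vlo x) := hInt v hv x hx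
    have h2 : IntegrableOn (h v) (Ioc x y) :=
      (hInt v hv y hy).mono_set (Ioc_subset_Ioc_left hx.1.le)
    have := setIntegral_union hd measurableSet_Ioc h1 h2 (f := h v) (μ := volume)
    rw [hU] at this
    rw [hcdf v hv x hx, hcdf v hv y hy, this]
    ring
  -- FTC: derivative of H v in the second variable is h v
  have hderivx : ∀ v ∈ Icc a b, ∀ x ∈ Ioo Vlo V0, HasDerivAt (H v) (h v x) x := by
    intro v hv x hx
    set x₁ : ℝ := (Vlo + x) / 2 with hx₁def
    have hx₁a : Vlo < x₁ := by rw [hx₁def]; linarith [hx.1]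
    have hx₁b : x₁ < x := by rw [hx₁def]; linarith [hx.1]
    have hx₁mem : x₁ ∈ Ioo Vlo V0 := ⟨hx₁a, lt_trans hx₁b hx.2⟩
    have hii : IntervalIntegrable (h v) volume x₁ x := by
      rw [intervalIntegrable_iff_integrableOn_Ioc_of_le hx₁b.le]
      exact (hInt v hv x hx).mono_set (Ioc_subset_Ioc_left hx₁a.le)
    have hmeas := ContinuousOn.stronglyMeasurableAtFilter (μ := volume) isOpen_Ioo
      (hh_cont v hv) x hx
    have hca : ContinuousAt (h v) x := (hh_cont v hv).continuousAt (isOpen_Ioo.mem_nhds hx)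
    have hd := intervalIntegral.integral_hasDerivAt_right hii hmeas hca
    have hd2 : HasDerivAt (fun u => H v x₁ + ∫ t in x₁..u, h v t) (h v x) x := hd.const_add _
    apply hd2.congr_of_eventuallyEq
    have hmem : Ioo x₁ V0 ∈ 𝓝 x := isOpen_Ioo.mem_nhds ⟨hx₁b, hx.2⟩
    filter_upwards [hmem] with y hy
    have hymem : y ∈ Ioo Vlo V0 := ⟨lt_trans hx₁a hy.1, hy.2⟩
    have hs := hsplit v hv x₁ hx₁mem y hymem hy.1.le
    rw [intervalIntegral.integral_of_le hy.1.le, hs]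
    ring
  -- FTC in the first variable
  have hFTCv : ∀ t ∈ Ioo Vlo V0, ∀ p ∈ Ioo a b, ∀ q ∈ Ioo a b, p ≤ q →
      ∫ x in p..q, Hv x t = H q t - H p t := by
    intro t ht p hp q hq hpq
    apply intervalIntegral.integral_eq_sub_of_hasDerivAt
    · intro x hx
      rw [uIcc_of_le hpq] at hx
      exact hH_deriv t ht x ⟨lt_of_lt_of_le hp.1 hx.1, lt_of_le_of_lt hx.2 hq.2⟩
    · apply ContinuousOn.intervalIntegrable
      apply (hHv_cont t ht).mono
      rw [uIcc_of_le hpq]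
      exact fun x hx => ⟨lt_of_lt_of_le hp.1 hx.1, lt_of_le_of_lt hx.2 hq.2⟩
  -- joint continuity of H on the open rectangle
  have hjc : ∀ v ∈ Ioo a b, ∀ x ∈ Ioo Vlo V0,
      ContinuousAt (fun q : ℝ × ℝ => H q.1 q.2) (v, x) := by
    intro v hv x hx
    have hvIcc : v ∈ Icc a b := hIooIcc hv
    rw [Metric.continuousAt_iff]
    intro ε hε
    have hcx : ContinuousAt (H v) x := (hH_cont v hvIcc).continuousAt
    rw [Metric.continuousAt_iff] at hcx
    obtain ⟨δ₀, hδ₀, hP⟩ := hcx (ε / 4) (by linarith)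
    obtain ⟨δ₁, hδ₁pos, hδ₁0, hδ₁a, hδ₁b⟩ :
        ∃ δ₁ : ℝ, 0 < δ₁ ∧ δ₁ < δ₀ ∧ Vlo < x - δ₁ ∧ x + δ₁ < V0 := by
      refine ⟨min (δ₀ / 2) (min ((x - Vlo) / 2) ((V0 - x) / 2)), ?_, ?_, ?_, ?_⟩
      · exact lt_min (by linarith) (lt_min (by linarith [hx.1]) (by linarith [hx.2]))
      · have := min_le_left (δ₀ / 2) (min ((x - Vlo) / 2) ((V0 - x) / 2))
        linarith
      · have h1 := min_le_right (δ₀ / 2) (min ((x - Vlo) / 2) ((V0 - x) / 2))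
        have h2 := min_le_left ((x - Vlo) / 2) ((V0 - x) / 2)
        linarith [hx.1]
      · have h1 := min_le_right (δ₀ / 2) (min ((x - Vlo) / 2) ((V0 - x) / 2))
        have h2 := min_le_right ((x - Vlo) / 2) ((V0 - x) / 2)
        linarith [hx.2]
    have hxp : x + δ₁ ∈ Ioo Vlo V0 := ⟨by linarith [hx.1], hδ₁b⟩
    have hxm : x - δ₁ ∈ Ioo Vlo V0 := ⟨hδ₁a, by linarith [hx.2]⟩
    have hup0 : |H v (x + δ₁) - H v x| < ε / 4 := by
      have hd : dist (x + δ₁) x < δ₀ := by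
        rw [Real.dist_eq, add_sub_cancel_left, abs_of_pos hδ₁pos]; exact hδ₁0
      have := hP hd
      rwa [Real.dist_eq] at this
    have hdn0 : |H v (x - δ₁) - H v x| < ε / 4 := by
      have hd : dist (x - δ₁) x < δ₀ := by
        rw [Real.dist_eq]
        have : x - δ₁ - x = -δ₁ := by ring
        rw [this, abs_neg, abs_of_pos hδ₁pos]; exact hδ₁0
      have := hP hd
      rwa [Real.dist_eq] at this
    have hcp : ContinuousAt (fun u => H u (x + δ₁)) v :=
      (hH_deriv (x + δ₁) hxp v hv).continuousAt
    have hcm : ContinuousAt (fun u => H u (x - δ₁)) v :=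
      (hH_deriv (x - δ₁) hxm v hv).continuousAt
    rw [Metric.continuousAt_iff] at hcp hcm
    obtain ⟨δ₂, hδ₂, hP₂⟩ := hcp (ε / 4) (by linarith)
    obtain ⟨δ₃, hδ₃, hP₃⟩ := hcm (ε / 4) (by linarith)
    refine ⟨min δ₁ (min (min δ₂ δ₃) (min (v - a) (b - v))), ?_, ?_⟩
    · exact lt_min hδ₁pos (lt_min (lt_min hδ₂ hδ₃)
        (lt_min (by linarith [hv.1]) (by linarith [hv.2])))
    intro q hq
    rw [Prod.dist_eq, max_lt_iff] at hq
    obtain ⟨hq1, hq2⟩ := hq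
    have e2 : dist q.1 v < δ₂ := lt_of_lt_of_le hq1 (le_trans (min_le_right _ _)
      (le_trans (min_le_left _ _) (min_le_left _ _)))
    have e3 : dist q.1 v < δ₃ := lt_of_lt_of_le hq1 (le_trans (min_le_right _ _)
      (le_trans (min_le_left _ _) (min_le_right _ _)))
    have eab : dist q.1 v < min (v - a) (b - v) :=
      lt_of_lt_of_le hq1 (le_trans (min_le_right _ _) (min_le_right _ _))
    have e1 : dist q.2 x < δ₁ := lt_of_lt_of_le hq2 (min_le_left _ _)
    rw [Real.dist_eq, lt_min_iff] at eab
    rw [Real.dist_eq] at e1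
    obtain ⟨eab1, eab2⟩ := eab
    rw [abs_lt] at e1
    have hu_mem : q.1 ∈ Icc a b := by
      constructor
      · rw [abs_lt] at eab1; linarith [eab1.1]
      · rw [abs_lt] at eab2; linarith [eab2.2]
    have hup : H q.1 q.2 ≤ H q.1 (x + δ₁) := hH_mono q.1 hu_mem (by linarith [e1.2])
    have hdn : H q.1 (x - δ₁) ≤ H q.1 q.2 := hH_mono q.1 hu_mem (by linarith [e1.1])
    have Ep : |H q.1 (x + δ₁) - H v (x + δ₁)| < ε / 4 := by
      have := hP₂ e2; rwa [Real.dist_eq] at this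
    have Em : |H q.1 (x - δ₁) - H v (x - δ₁)| < ε / 4 := by
      have := hP₃ e3; rwa [Real.dist_eq] at this
    rw [Real.dist_eq, abs_lt]
    rw [abs_lt] at hup0 hdn0 Ep Em
    constructor
    · linarith [hdn0.1, Em.1]
    · linarith [hup0.2, Ep.2]
  -- the region S
  set S : Set (ℝ × ℝ) :=
    {p : ℝ × ℝ | (A < p.2 ∧ p.2 ≤ B) ∧ p.2 + (v₁ - A) < p.1 ∧ p.1 ≤ v₂} with hSdef
  have hS_meas : MeasurableSet S := by
    apply MeasurableSet.inter
    · exact (measurableSet_lt measurable_const measurable_snd).inter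
        (measurableSet_le measurable_snd measurable_const)
    · exact (measurableSet_lt (measurable_snd.add_const _) measurable_fst).inter
        (measurableSet_le measurable_fst measurable_const)
  -- measurability of h on a neighborhood of S
  have hhmeas : AEMeasurable (fun p : ℝ × ℝ => ENNReal.ofReal (h p.1 p.2))
      (((volume : Measure ℝ).prod volume).restrict S) := by
    obtain ⟨w₁, w₂, A', B', hw₁a, hw₁1, hw₂2, hw₂b, hA'1, hA'2, hB'1, hB'2⟩ :
        ∃ w₁ w₂ A' B' : ℝ, a < w₁ ∧ w₁ < v₁ ∧ v₂ < w₂ ∧ w₂ < b ∧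
          Vlo < A' ∧ A' < A ∧ B < B' ∧ B' < V0 := by
      refine ⟨a + c / 2, b - c / 2, (Vlo + A) / 2, (B + V0) / 2, by linarith, ?_, ?_,
        by linarith, by linarith, by linarith, by linarith, by linarith⟩
      · rw [hv₁def]; linarith
      · rw [hv₂def]; linarith
    have hw12 : w₁ < w₂ := by linarith
    have hA'B' : A' < B' := by linarith
    have hrect1 : Icc w₁ w₂ ⊆ Ioo a b := fun s hs => ⟨lt_of_lt_of_le hw₁a hs.1,
      lt_of_le_of_lt hs.2 hw₂b⟩
    have hrect2 : Icc A' B' ⊆ Ioo Vlo V0 := fun s hs => ⟨lt_of_lt_of_le hA'1 hs.1,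
      lt_of_le_of_lt hs.2 hB'2⟩
    set U : Set (ℝ × ℝ) := Ioo w₁ w₂ ×ˢ Ioo A' B' with hUdef
    have hU_meas : MeasurableSet U := measurableSet_Ioo.prod measurableSet_Ioo
    set cl1 : ℝ → ℝ := fun s => max w₁ (min w₂ s) with hcl1def
    set cl2 : ℝ → ℝ := fun s => max A' (min B' s) with hcl2def
    have hcl1mem : ∀ s, cl1 s ∈ Icc w₁ w₂ := fun s =>
      ⟨le_max_left _ _, max_le hw12.le (min_le_left _ _)⟩
    have hcl2mem : ∀ s, cl2 s ∈ Icc A' B' := fun s =>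
      ⟨le_max_left _ _, max_le hA'B'.le (min_le_left _ _)⟩
    have hcl1c : Continuous cl1 := continuous_const.max (continuous_const.min continuous_id)
    have hcl2c : Continuous cl2 := continuous_const.max (continuous_const.min continuous_id)
    set G : ℝ × ℝ → ℝ := fun p => H (cl1 p.1) (cl2 p.2) with hGdef
    have hGc : Continuous G := by
      rw [continuous_iff_continuousAt]
      intro p
      have hca := hjc (cl1 p.1) (hrect1 (hcl1mem p.1)) (cl2 p.2) (hrect2 (hcl2mem p.2))
      have hmap : Continuous (fun p : ℝ × ℝ => ((cl1 p.1, cl2 p.2) : ℝ × ℝ)) :=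
        (hcl1c.comp continuous_fst).prodMk (hcl2c.comp continuous_snd)
      exact ContinuousAt.comp (f := fun p : ℝ × ℝ => ((cl1 p.1, cl2 p.2) : ℝ × ℝ))
        hca (hmap.continuousAt (x := p))
    set g : ℕ → ℝ × ℝ → ℝ :=
      fun n p => (G (p.1, p.2 + 1 / ((n : ℝ) + 1)) - G p) * ((n : ℝ) + 1) with hgdef
    have hgmeas : ∀ n, AEMeasurable (g n)
        (((volume : Measure ℝ).prod volume).restrict U) := by
      intro n
      apply Continuous.aemeasurable
      exact ((hGc.comp ((continuous_fst).prodMk ((continuous_snd).add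
        continuous_const))).sub hGc).mul continuous_const
    have htends : ∀ p ∈ U, Tendsto (fun n => g n p) atTop (𝓝 (h p.1 p.2)) := by
      intro p hp
      have hp1 : p.1 ∈ Ioo w₁ w₂ := hp.1
      have hp2 : p.2 ∈ Ioo A' B' := hp.2
      have hp1ab : p.1 ∈ Ioo a b := hrect1 (Ioo_subset_Icc_self hp1)
      have hp2V : p.2 ∈ Ioo Vlo V0 := hrect2 (Ioo_subset_Icc_self hp2)
      have hd := hderivx p.1 (hIooIcc hp1ab) p.2 hp2V
      have hslope := hasDerivAt_iff_tendsto_slope.1 hd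
      have hy : Tendsto (fun n : ℕ => p.2 + 1 / ((n : ℝ) + 1)) atTop (𝓝[≠] p.2) := by
        apply tendsto_nhdsWithin_of_tendsto_nhds_of_eventually_within
        · have h0 : Tendsto (fun n : ℕ => 1 / ((n : ℝ) + 1)) atTop (𝓝 0) :=
            tendsto_one_div_add_atTop_nhds_zero_nat
          have := tendsto_const_nhds.add h0 (f := fun _ : ℕ => p.2)
          simpa using this
        · apply Eventually.of_forall
          intro n
          have hpos' : (0 : ℝ) < 1 / ((n : ℝ) + 1) := by positivity
          simp only [mem_compl_iff, mem_singleton_iff]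
          intro hcontra
          nlinarith [hcontra]
      have hcomp := hslope.comp hy
      apply Tendsto.congr' ?_ hcomp
      have hev : ∀ᶠ n : ℕ in atTop, 1 / ((n : ℝ) + 1) < B' - p.2 :=
        tendsto_one_div_add_atTop_nhds_zero_nat.eventually_lt_const (by linarith [hp2.2])
      filter_upwards [hev] with n hn
      have hpos' : (0 : ℝ) < 1 / ((n : ℝ) + 1) := by positivity
      have hyB : p.2 + 1 / ((n : ℝ) + 1) ≤ B' := by linarith
      have hyA : A' ≤ p.2 + 1 / ((n : ℝ) + 1) := by linarith [hp2.1]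
      have c1 : cl1 p.1 = p.1 := by
        rw [hcl1def]
        simp only
        rw [min_eq_right hp1.2.le, max_eq_right hp1.1.le]
      have c2 : cl2 p.2 = p.2 := by
        rw [hcl2def]
        simp only
        rw [min_eq_right hp2.2.le, max_eq_right hp2.1.le]
      have c3 : cl2 (p.2 + 1 / ((n : ℝ) + 1)) = p.2 + 1 / ((n : ℝ) + 1) := by
        rw [hcl2def]
        simp only
        rw [min_eq_right hyB, max_eq_right hyA]
      show (fun y => slope (H p.1) p.2 y) (p.2 + 1 / ((n : ℝ) + 1)) = g n p
      rw [hgdef]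
      simp only [hGdef, c1, c2, c3]
      rw [slope_def_field, add_sub_cancel_left, one_div, div_inv_eq_mul]
    have hSsubU : S ⊆ U := by
      intro p hp
      rw [hSdef] at hp
      obtain ⟨⟨hp1, hp2⟩, hp3, hp4⟩ := hp
      constructor
      · exact ⟨by linarith, by linarith⟩
      · exact ⟨by linarith, by linarith⟩
    have hmU : AEMeasurable (fun p : ℝ × ℝ => h p.1 p.2)
        (((volume : Measure ℝ).prod volume).restrict U) := by
      apply aemeasurable_of_tendsto_metrizable_ae atTop hgmeas
      filter_upwards [ae_restrict_mem hU_meas] with p hp using htends p hp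
    exact ENNReal.measurable_ofReal.comp_aemeasurable
      (hmU.mono_measure (Measure.restrict_mono hSsubU le_rfl))
  have hfind : AEMeasurable (S.indicator (fun p : ℝ × ℝ => ENNReal.ofReal (h p.1 p.2)))
      ((volume : Measure ℝ).prod volume) := by
    rw [aemeasurable_indicator_iff hS_meas]
    exact hhmeas
  -- the two comparison functions
  set ψ : ℝ → ℝ := fun u => H u (u + (A - v₁)) with hψdef
  set φ : ℝ → ℝ := fun t => H (t + (v₁ - A)) t - H v₂ t with hφdef
  -- slicewise estimate in the u-direction
  have hclaimT : ∀ t ∈ Ioc A B,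
      (∫⁻ u in Ioc (t + (v₁ - A)) v₂, ENNReal.ofReal (h u t)) ≤ ENNReal.ofReal (φ t)
        ∧ 0 ≤ φ t := by
    intro t ht
    have htI : t ∈ Ioo Vlo V0 := hsub2 ⟨ht.1.le, ht.2⟩
    have hw1 : v₁ < t + (v₁ - A) := by linarith [ht.1]
    have hw2 : t + (v₁ - A) ≤ v₂ := by
      have hBval : B = A + (v₂ - v₁) := hBdef
      linarith [ht.2]
    have hwI : t + (v₁ - A) ∈ Ioo a b := ⟨lt_trans hv₁I.1 hw1, lt_of_le_of_lt hw2 hv₂I.2⟩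
    have hIccsub : Icc (t + (v₁ - A)) v₂ ⊆ Ioo a b := fun u hu =>
      ⟨lt_of_lt_of_le hwI.1 hu.1, lt_of_le_of_lt hu.2 hv₂I.2⟩
    have hHvcont : ContinuousOn (fun u => Hv u t) (Icc (t + (v₁ - A)) v₂) :=
      (hHv_cont t htI).mono hIccsub
    have hHvint : IntegrableOn (fun u => -Hv u t) (Ioc (t + (v₁ - A)) v₂) :=
      ((hHvcont.integrableOn_Icc).mono_set Ioc_subset_Icc_self).neg
    have hIocv : ∫ u in Ioc (t + (v₁ - A)) v₂, Hv u t = H v₂ t - H (t + (v₁ - A)) t := by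
      rw [← intervalIntegral.integral_of_le hw2]
      exact hFTCv t htI (t + (v₁ - A)) hwI v₂ hv₂I hw2
    have hφt : φ t = H (t + (v₁ - A)) t - H v₂ t := by rw [hφdef]
    have hφval : ∫ u in Ioc (t + (v₁ - A)) v₂, -Hv u t = φ t := by
      rw [integral_neg, hIocv, hφt]; ring
    have hnnpt : ∀ u ∈ Ioc (t + (v₁ - A)) v₂, 0 ≤ -Hv u t := by
      intro u hu
      have huI : u ∈ Ioo a b := hIccsub (Ioc_subset_Icc_self hu)
      have h1 := hcon u huI t htI
      have h2 := hh_pos u (hIooIcc huI) t htI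
      linarith
    have hφnn : 0 ≤ φ t := by
      rw [← hφval]
      exact setIntegral_nonneg measurableSet_Ioc hnnpt
    refine ⟨?_, hφnn⟩
    calc ∫⁻ u in Ioc (t + (v₁ - A)) v₂, ENNReal.ofReal (h u t)
        ≤ ∫⁻ u in Ioc (t + (v₁ - A)) v₂, ENNReal.ofReal (-Hv u t) := by
          apply lintegral_mono_ae
          rw [ae_restrict_iff' measurableSet_Ioc]
          apply Eventually.of_forall
          intro u hu
          have huI : u ∈ Ioo a b := hIccsub (Ioc_subset_Icc_self hu)
          exact ENNReal.ofReal_le_ofReal (by linarith [hcon u huI t htI])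
      _ = ENNReal.ofReal (∫ u in Ioc (t + (v₁ - A)) v₂, -Hv u t) := by
          rw [← ofReal_integral_eq_lintegral_ofReal hHvint]
          filter_upwards [ae_restrict_mem measurableSet_Ioc] with u hu
          exact hnnpt u hu
      _ = ENNReal.ofReal (φ t) := by rw [hφval]
  -- slicewise computation in the t-direction
  have hclaimU : ∀ u ∈ Ioc v₁ v₂,
      (∫⁻ t in Ioo A (u + (A - v₁)), ENNReal.ofReal (h u t))
        = ENNReal.ofReal (H u (u + (A - v₁)) - H u A)
        ∧ 0 ≤ H u (u + (A - v₁)) - H u A := by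
    intro u hu
    have huI : u ∈ Ioo a b := hsub1 (Ioc_subset_Icc_self hu)
    have huIcc : u ∈ Icc a b := hIooIcc huI
    have hxu1 : A < u + (A - v₁) := by linarith [hu.1]
    have hxu2 : u + (A - v₁) ≤ B := by
      have hBval : B = A + (v₂ - v₁) := hBdef
      linarith [hu.2]
    have hxuI : u + (A - v₁) ∈ Ioo Vlo V0 := hsub2 ⟨hxu1.le, hxu2⟩
    have hIoosub : Ioo A (u + (A - v₁)) ⊆ Ioo Vlo V0 := fun t ht =>
      ⟨lt_trans hVloA ht.1, lt_trans ht.2 hxuI.2⟩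
    have hint' : IntegrableOn (h u) (Ioo A (u + (A - v₁))) :=
      (hInt u huIcc (u + (A - v₁)) hxuI).mono_set
        (fun t ht => ⟨lt_trans hVloA ht.1, ht.2.le⟩)
    have hvalo : ∫ t in Ioo A (u + (A - v₁)), h u t = H u (u + (A - v₁)) - H u A := by
      rw [← integral_Ioc_eq_integral_Ioo]
      exact hsplit u huIcc A hA_mem (u + (A - v₁)) hxuI hxu1.le
    have hnn : 0 ≤ᵐ[volume.restrict (Ioo A (u + (A - v₁)))] h u := by
      filter_upwards [ae_restrict_mem measurableSet_Ioo] with t ht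
      exact (hh_pos u huIcc t (hIoosub ht)).le
    constructor
    · rw [← ofReal_integral_eq_lintegral_ofReal hint' hnn, hvalo]
    · rw [← hvalo]
      exact setIntegral_nonneg measurableSet_Ioo
        (fun t ht => (hh_pos u huIcc t (hIoosub ht)).le)
  -- continuity and integrability facts
  have hφ_int : IntegrableOn φ (Ioc A B) := by
    have hc1 : ContinuousOn (fun t => H (t + (v₁ - A)) t) (Icc A B) := by
      intro t ht
      have hBval : B = A + (v₂ - v₁) := hBdef
      have h1 : t + (v₁ - A) ∈ Ioo a b :=
        hsub1 ⟨by linarith [ht.1], by linarith [ht.2]⟩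
      have h2 : t ∈ Ioo Vlo V0 := hsub2 ht
      have hmap : Continuous (fun t : ℝ => ((t + (v₁ - A), t) : ℝ × ℝ)) :=
        (continuous_id.add continuous_const).prodMk continuous_id
      exact (ContinuousAt.comp (f := fun t : ℝ => ((t + (v₁ - A), t) : ℝ × ℝ)) (hjc _ h1 t h2) (hmap.continuousAt (x := t))).continuousWithinAt
    have : ContinuousOn φ (Icc A B) := by
      rw [hφdef]
      exact hc1.sub (hH_cont v₂ (hIooIcc hv₂I)).continuousOn
    exact this.integrableOn_Icc.mono_set Ioc_subset_Icc_self
  have hψ_int : IntegrableOn ψ (Ioc v₁ v₂) := by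
    have hψc : ContinuousOn ψ (Icc v₁ v₂) := by
      intro u hu
      have hBval : B = A + (v₂ - v₁) := hBdef
      have h1 : u ∈ Ioo a b := hsub1 hu
      have h2 : u + (A - v₁) ∈ Ioo Vlo V0 :=
        hsub2 ⟨by linarith [hu.1], by linarith [hu.2]⟩
      have hmap : Continuous (fun u : ℝ => ((u, u + (A - v₁)) : ℝ × ℝ)) :=
        continuous_id.prodMk (continuous_id.add continuous_const)
      exact (ContinuousAt.comp (f := fun u : ℝ => ((u, u + (A - v₁)) : ℝ × ℝ)) (hjc u h1 _ h2) (hmap.continuousAt (x := u))).continuousWithinAt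
    exact hψc.integrableOn_Icc.mono_set Ioc_subset_Icc_self
  have hHA_int : IntegrableOn (fun u => H u A) (Ioc v₁ v₂) := by
    have : ContinuousOn (fun u => H u A) (Icc v₁ v₂) := fun u hu =>
      ((hH_deriv A hA_mem u (hsub1 hu)).continuousAt).continuousWithinAt
    exact this.integrableOn_Icc.mono_set Ioc_subset_Icc_self
  have hHv₂_int : IntegrableOn (H v₂) (Ioc A B) :=
    ((hH_cont v₂ (hIooIcc hv₂I)).continuousOn.integrableOn_Icc).mono_set Ioc_subset_Icc_self
  have hdiag_int : IntegrableOn (fun t => H (t + (v₁ - A)) t) (Ioc A B) := by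
    have : (fun t => H (t + (v₁ - A)) t) = fun t => φ t + H v₂ t := by
      funext t; rw [hφdef]; ring
    rw [this]
    exact hφ_int.add hHv₂_int
  -- the central inequality via Tonelli
  have hcore : ∫ t in Ioc A B, H v₂ t ≤ ∫ u in Ioc v₁ v₂, H u A := by
    have hφnn_ae : 0 ≤ᵐ[volume.restrict (Ioc A B)] φ := by
      filter_upwards [ae_restrict_mem measurableSet_Ioc] with t ht
      exact (hclaimT t ht).2
    have hsub_int : IntegrableOn (fun u => ψ u - H u A) (Ioc v₁ v₂) := hψ_int.sub hHA_int
    have hsubnn : 0 ≤ᵐ[volume.restrict (Ioc v₁ v₂)] (fun u => ψ u - H u A) := by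
      filter_upwards [ae_restrict_mem measurableSet_Ioc] with u hu
      exact (hclaimU u hu).2
    -- Direction A : bound the iterated integral (t outer, u inner)
    have hDirA : (∫⁻ t, ∫⁻ u, S.indicator (fun p : ℝ × ℝ => ENNReal.ofReal (h p.1 p.2)) (u, t))
        ≤ ENNReal.ofReal (∫ t in Ioc A B, φ t) := by
      have hb : ∀ t : ℝ, (∫⁻ u, S.indicator (fun p : ℝ × ℝ => ENNReal.ofReal (h p.1 p.2)) (u, t))
          ≤ (Ioc A B).indicator (fun t => ENNReal.ofReal (φ t)) t := by
        intro t
        by_cases ht : t ∈ Ioc A B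
        · have hsec : (fun u => S.indicator (fun p : ℝ × ℝ => ENNReal.ofReal (h p.1 p.2)) (u, t)) =
              (Ioc (t + (v₁ - A)) v₂).indicator (fun u => ENNReal.ofReal (h u t)) := by
            funext u
            by_cases hu : u ∈ Ioc (t + (v₁ - A)) v₂
            · rw [indicator_of_mem hu, indicator_of_mem]
              exact ⟨⟨ht.1, ht.2⟩, hu.1, hu.2⟩
            · rw [indicator_of_notMem hu, indicator_of_notMem]
              intro hS'
              exact hu ⟨hS'.2.1, hS'.2.2⟩
          rw [hsec, lintegral_indicator measurableSet_Ioc, indicator_of_mem ht]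
          exact (hclaimT t ht).1
        · have hsec : (fun u => S.indicator (fun p : ℝ × ℝ => ENNReal.ofReal (h p.1 p.2)) (u, t)) =
              fun _ => 0 := by
            funext u
            rw [indicator_of_notMem]
            intro hS'
            exact ht ⟨hS'.1.1, hS'.1.2⟩
          rw [hsec, indicator_of_notMem ht]
          simp
      calc (∫⁻ t, ∫⁻ u, S.indicator (fun p : ℝ × ℝ => ENNReal.ofReal (h p.1 p.2)) (u, t))
          ≤ ∫⁻ t, (Ioc A B).indicator (fun t => ENNReal.ofReal (φ t)) t := lintegral_mono hb
        _ = ∫⁻ t in Ioc A B, ENNReal.ofReal (φ t) := lintegral_indicator measurableSet_Ioc _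
        _ = ENNReal.ofReal (∫ t in Ioc A B, φ t) :=
            (ofReal_integral_eq_lintegral_ofReal hφ_int hφnn_ae).symm
    -- Direction B : compute the iterated integral (u outer, t inner)
    have hDirB : (∫⁻ u, ∫⁻ t, S.indicator (fun p : ℝ × ℝ => ENNReal.ofReal (h p.1 p.2)) (u, t))
        = ENNReal.ofReal (∫ u in Ioc v₁ v₂, (ψ u - H u A)) := by
      have hBval : B = A + (v₂ - v₁) := hBdef
      have hb : ∀ u : ℝ, (∫⁻ t, S.indicator (fun p : ℝ × ℝ => ENNReal.ofReal (h p.1 p.2)) (u, t))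
          = (Ioc v₁ v₂).indicator (fun u => ENNReal.ofReal (ψ u - H u A)) u := by
        intro u
        by_cases hu : u ∈ Ioc v₁ v₂
        · have hsec : (fun t => S.indicator (fun p : ℝ × ℝ => ENNReal.ofReal (h p.1 p.2)) (u, t)) =
              (Ioo A (u + (A - v₁))).indicator (fun t => ENNReal.ofReal (h u t)) := by
            funext t
            by_cases ht : t ∈ Ioo A (u + (A - v₁))
            · rw [indicator_of_mem ht, indicator_of_mem]
              refine ⟨⟨ht.1, by linarith [ht.2, hu.2]⟩, by linarith [ht.2], hu.2⟩
            · rw [indicator_of_notMem ht, indicator_of_notMem]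
              intro hS'
              exact ht ⟨hS'.1.1, by linarith [hS'.2.1]⟩
          rw [hsec, lintegral_indicator measurableSet_Ioo, indicator_of_mem hu]
          exact (hclaimU u hu).1
        · have hsec : (fun t => S.indicator (fun p : ℝ × ℝ => ENNReal.ofReal (h p.1 p.2)) (u, t)) =
              fun _ => 0 := by
            funext t
            rw [indicator_of_notMem]
            intro hS'
            exact hu ⟨by linarith [hS'.2.1, hS'.1.1], hS'.2.2⟩
          rw [hsec, indicator_of_notMem hu]
          simp
      calc (∫⁻ u, ∫⁻ t, S.indicator (fun p : ℝ × ℝ => ENNReal.ofReal (h p.1 p.2)) (u, t))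
          = ∫⁻ u, (Ioc v₁ v₂).indicator (fun u => ENNReal.ofReal (ψ u - H u A)) u :=
            lintegral_congr hb
        _ = ∫⁻ u in Ioc v₁ v₂, ENNReal.ofReal (ψ u - H u A) := lintegral_indicator measurableSet_Ioc _
        _ = ENNReal.ofReal (∫ u in Ioc v₁ v₂, (ψ u - H u A)) :=
            (ofReal_integral_eq_lintegral_ofReal hsub_int hsubnn).symm
    -- Tonelli: combine the two directions
    have hT1 := lintegral_prod_symm _ hfind
    have hT2 := lintegral_prod _ hfind
    have hineq : ENNReal.ofReal (∫ u in Ioc v₁ v₂, (ψ u - H u A))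
        ≤ ENNReal.ofReal (∫ t in Ioc A B, φ t) := by
      rw [← hDirB]
      calc (∫⁻ u, ∫⁻ t, S.indicator (fun p : ℝ × ℝ => ENNReal.ofReal (h p.1 p.2)) (u, t))
          = ∫⁻ p, S.indicator (fun p : ℝ × ℝ => ENNReal.ofReal (h p.1 p.2)) p
              ∂((volume : Measure ℝ).prod volume) := hT2.symm
        _ = ∫⁻ t, ∫⁻ u, S.indicator (fun p : ℝ × ℝ => ENNReal.ofReal (h p.1 p.2)) (u, t) := hT1
        _ ≤ ENNReal.ofReal (∫ t in Ioc A B, φ t) := hDirA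
    have hφint_nn : 0 ≤ ∫ t in Ioc A B, φ t :=
      setIntegral_nonneg measurableSet_Ioc (fun t ht => (hclaimT t ht).2)
    have hreal : ∫ u in Ioc v₁ v₂, (ψ u - H u A) ≤ ∫ t in Ioc A B, φ t :=
      (ENNReal.ofReal_le_ofReal_iff hφint_nn).1 hineq
    -- split the integrals
    have hsplitB : ∫ u in Ioc v₁ v₂, (ψ u - H u A)
        = (∫ u in Ioc v₁ v₂, ψ u) - ∫ u in Ioc v₁ v₂, H u A := integral_sub hψ_int hHA_int
    have hsplitφ : ∫ t in Ioc A B, φ t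
        = (∫ t in Ioc A B, H (t + (v₁ - A)) t) - ∫ t in Ioc A B, H v₂ t := by
      rw [hφdef]
      exact integral_sub hdiag_int hHv₂_int
    -- substitution
    have hsubst : ∫ t in Ioc A B, H (t + (v₁ - A)) t = ∫ u in Ioc v₁ v₂, ψ u := by
      have e1 : ∀ t : ℝ, H (t + (v₁ - A)) t = ψ (t + (v₁ - A)) := by
        intro t
        rw [hψdef]
        simp only
        congr 1
        ring
      have eA : A + (v₁ - A) = v₁ := by ring
      have eB : B + (v₁ - A) = v₂ := by rw [hBdef]; ring
      calc ∫ t in Ioc A B, H (t + (v₁ - A)) t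
          = ∫ t in Ioc A B, ψ (t + (v₁ - A)) := by
            apply setIntegral_congr_fun measurableSet_Ioc
            intro t _
            exact e1 t
        _ = ∫ t in A..B, ψ (t + (v₁ - A)) := (intervalIntegral.integral_of_le hAB.le).symm
        _ = ∫ u in (A + (v₁ - A))..(B + (v₁ - A)), ψ u :=
            intervalIntegral.integral_comp_add_right ψ (v₁ - A)
        _ = ∫ u in v₁..v₂, ψ u := by rw [eA, eB]
        _ = ∫ u in Ioc v₁ v₂, ψ u := intervalIntegral.integral_of_le h12.le
    linarith
  -- lower bound for the left side
  have hlow : m * ((v₂ - v₁) / 2) ≤ ∫ t in Ioc A B, H v₂ t := by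
    have hnn2 : 0 ≤ᵐ[volume.restrict (Ioc A B)] H v₂ := by
      filter_upwards [ae_restrict_mem measurableSet_Ioc] with t ht
      have h0 : H v₂ Vlo = 0 := hzero v₂ (hIooIcc hv₂I) Vlo le_rfl
      have := hH_mono v₂ (hIooIcc hv₂I) (le_of_lt (lt_trans hVloA ht.1))
      show (0:ℝ) ≤ H v₂ t
      linarith
    have hsubIoc : Ioc t₀ B ⊆ Ioc A B := Ioc_subset_Ioc_left hAt₀.le
    have h1 : ∫ t in Ioc t₀ B, H v₂ t ≤ ∫ t in Ioc A B, H v₂ t :=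
      setIntegral_mono_set hHv₂_int hnn2 (HasSubset.Subset.eventuallyLE hsubIoc)
    have h2 : ∫ t in Ioc t₀ B, (fun _ : ℝ => m) t ≤ ∫ t in Ioc t₀ B, H v₂ t := by
      apply setIntegral_mono_on
      · exact integrableOn_const measure_Ioc_lt_top.ne enorm_ne_top
      · exact hHv₂_int.mono_set hsubIoc
      · exact measurableSet_Ioc
      · exact fun t ht => hH_mono v₂ (hIooIcc hv₂I) ht.1.le
    have h3 : ∫ t in Ioc t₀ B, (fun _ : ℝ => m) t = (B - t₀) * m := by
      rw [setIntegral_const, Real.volume_real_Ioc_of_le (by linarith [ht₀B] : t₀ ≤ B)]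
      simp [smul_eq_mul]
    have hBt₀ : (v₂ - v₁) / 2 ≤ B - t₀ := by
      have hBval : B = A + (v₂ - v₁) := hBdef
      have ht₀val : t₀ = Vlo + (v₂ - v₁) / 2 := ht₀def
      linarith
    calc m * ((v₂ - v₁) / 2) ≤ m * (B - t₀) := mul_le_mul_of_nonneg_left hBt₀ hm.le
      _ = (B - t₀) * m := mul_comm _ _
      _ = ∫ t in Ioc t₀ B, (fun _ : ℝ => m) t := h3.symm
      _ ≤ ∫ t in Ioc t₀ B, H v₂ t := h2
      _ ≤ ∫ t in Ioc A B, H v₂ t := h1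
  -- upper bound for the right side
  have hupp : ∫ u in Ioc v₁ v₂, H u A ≤ (v₂ - v₁) * H v₁ A := by
    have hpt : ∀ u ∈ Ioc v₁ v₂, H u A ≤ H v₁ A := by
      intro u hu
      have huI : u ∈ Ioo a b := hsub1 (Ioc_subset_Icc_self hu)
      have hFTC := hFTCv A hA_mem v₁ hv₁I u huI hu.1.le
      have hnnpt : ∀ x ∈ Ioc v₁ u, 0 ≤ -Hv x A := by
        intro x hx
        have hxI : x ∈ Ioo a b := ⟨lt_trans hv₁I.1 hx.1, lt_of_le_of_lt hx.2 huI.2⟩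
        have h1 := hcon x hxI A hA_mem
        have h2 := hh_pos x (hIooIcc hxI) A hA_mem
        linarith
      have hle : ∫ x in v₁..u, Hv x A ≤ 0 := by
        rw [intervalIntegral.integral_of_le hu.1.le]
        have hneg : 0 ≤ ∫ x in Ioc v₁ u, -Hv x A :=
          setIntegral_nonneg measurableSet_Ioc hnnpt
        rw [integral_neg] at hneg
        linarith
      linarith [hFTC ▸ hle]
    have h1 : ∫ u in Ioc v₁ v₂, H u A ≤ ∫ u in Ioc v₁ v₂, (fun _ : ℝ => H v₁ A) u := by
      apply setIntegral_mono_on hHA_int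
      · exact integrableOn_const measure_Ioc_lt_top.ne enorm_ne_top
      · exact measurableSet_Ioc
      · exact hpt
    have h2 : ∫ u in Ioc v₁ v₂, (fun _ : ℝ => H v₁ A) u = (v₂ - v₁) * H v₁ A := by
      rw [setIntegral_const, Real.volume_real_Ioc_of_le h12.le]
      simp [smul_eq_mul]
    linarith
  have hfin : (v₂ - v₁) * H v₁ A < (v₂ - v₁) * (m / 2) :=
    mul_lt_mul_of_pos_left hHv₁A hΔpos
  nlinarith
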